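/- Let f : 2^E → ℝ be submodular with f(∅) ≥ 0, A ⊆ E, and let o_1,...,o_n be an enumeration of O ⊆ E. Define u(o_j) = f({o_1,...,o_j}) - f({o_1,...,o_{j-1}}) and w̄(o_j) = max(0, f((A \ {o_j}) ∪ {o_1,...,o_j}) - f((A \ {o_j}) ∪ {o_1,...,o_{j-1}})). Then Σ_{j=1}^n [u(o_j) - w̄(o_j)] ≤ f(A) - (f(A ∪ O) - f(O)). -/

import Mathlib

/-- The prefix `{o_1, ..., o_j}` of an enumeration `o`. -/
def prefSet {α : Type*} [DecidableEq α] {n : ℕ} (o : Fin n → α) (j : ℕ) : Finset α :=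
  (Finset.univ.filter fun i : Fin n => (i : ℕ) < j).image o

lemma prefSet_zero {α : Type*} [DecidableEq α] {n : ℕ} (o : Fin n → α) :
    prefSet o 0 = ∅ := by simp [prefSet]

lemma prefSet_top {α : Type*} [DecidableEq α] {n : ℕ} (o : Fin n → α) :
    prefSet o n = Finset.image o Finset.univ := by
  unfold prefSet
  congr 1
  ext i
  simp [i.isLt]

lemma prefSet_succ {α : Type*} [DecidableEq α] {n : ℕ} (o : Fin n → α) (j : Fin n) :
    prefSet o ((j : ℕ) + 1) = insert (o j) (prefSet o (j : ℕ)) := by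
  unfold prefSet
  have : (Finset.univ.filter fun i : Fin n => (i : ℕ) < (j : ℕ) + 1)
      = insert j (Finset.univ.filter fun i : Fin n => (i : ℕ) < (j : ℕ)) := by
    ext i
    simp [Nat.lt_succ_iff_lt_or_eq, Fin.ext_iff, or_comm]
    rw [Fin.le_iff_val_le_val, Fin.lt_iff_val_lt_val]; omega
  rw [this, Finset.image_insert]

/-- `Σ_j [u(o_j) - w̄(o_j)] ≤ f(A) - (f(A ∪ O) - f(O))`. -/
theorem sum_u_sub_w_le {α : Type*} [DecidableEq α] (f : Finset α → ℝ)
    (hsub : ∀ S T : Finset α, f S + f T ≥ f (S ∪ T) + f (S ∩ T))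
    (h0 : f ∅ ≥ 0)
    (A : Finset α) (n : ℕ) (o : Fin n → α) (hinj : Function.Injective o)
    (O : Finset α) (hO : O = Finset.image o Finset.univ) :
    ∑ j : Fin n,
      ((f (prefSet o ((j : ℕ) + 1)) - f (prefSet o (j : ℕ)))
        - max 0 (f ((A \ {o j}) ∪ prefSet o ((j : ℕ) + 1))
                  - f ((A \ {o j}) ∪ prefSet o (j : ℕ))))
      ≤ f A - (f (A ∪ O) - f O) := by
  set g : ℕ → ℝ := fun j => f (prefSet o j) with hg
  set h : ℕ → ℝ := fun j => f (A ∪ prefSet o j) with hh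
  have step : ∀ j : Fin n,
      (g ((j : ℕ) + 1) - g (j : ℕ))
        - max 0 (f ((A \ {o j}) ∪ prefSet o ((j : ℕ) + 1))
                  - f ((A \ {o j}) ∪ prefSet o (j : ℕ)))
      ≤ (g ((j : ℕ) + 1) - g (j : ℕ)) - (h ((j : ℕ) + 1) - h (j : ℕ)) := by
    intro j
    have key : h ((j : ℕ) + 1) - h (j : ℕ)
        ≤ max 0 (f ((A \ {o j}) ∪ prefSet o ((j : ℕ) + 1))
                  - f ((A \ {o j}) ∪ prefSet o (j : ℕ))) := by
      by_cases hmem : o j ∈ A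
      · have : A ∪ prefSet o ((j : ℕ) + 1) = A ∪ prefSet o (j : ℕ) := by
          rw [prefSet_succ, Finset.union_insert, Finset.insert_eq_self.mpr (by simp [hmem])]
        have hz : h ((j : ℕ) + 1) - h (j : ℕ) = 0 := by simp [hh, this]
        rw [hz]; exact le_max_left _ _
      · have hA : A \ {o j} = A := Finset.sdiff_eq_self_of_disjoint (by simp [hmem])
        rw [hA]
        exact le_max_right _ _
    linarith
  calc ∑ j : Fin n,
      ((f (prefSet o ((j : ℕ) + 1)) - f (prefSet o (j : ℕ)))
        - max 0 (f ((A \ {o j}) ∪ prefSet o ((j : ℕ) + 1))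
                  - f ((A \ {o j}) ∪ prefSet o (j : ℕ))))
      ≤ ∑ j : Fin n, ((g ((j : ℕ) + 1) - g (j : ℕ)) - (h ((j : ℕ) + 1) - h (j : ℕ))) :=
        Finset.sum_le_sum (fun j _ => step j)
    _ = (∑ j : Fin n, (g ((j : ℕ) + 1) - g (j : ℕ)))
        - ∑ j : Fin n, (h ((j : ℕ) + 1) - h (j : ℕ)) := by rw [Finset.sum_sub_distrib]
    _ = (g n - g 0) - (h n - h 0) := by
        rw [Fin.sum_univ_eq_sum_range (fun j => g (j + 1) - g j) n,
          Fin.sum_univ_eq_sum_range (fun j => h (j + 1) - h j) n,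
          Finset.sum_range_sub g n, Finset.sum_range_sub h n]
    _ ≤ f A - (f (A ∪ O) - f O) := by
        have hO' : prefSet o n = O := by rw [prefSet_top, hO]
        have h1 : g n = f O := by simp [hg, hO']
        have h2 : h n = f (A ∪ O) := by simp [hh, hO']
        have h3 : g 0 = f ∅ := by simp [hg, prefSet_zero]
        have h4 : h 0 = f A := by simp [hh, prefSet_zero]
        rw [h1, h2, h3, h4]
        linarith
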